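/- Let x be a 4-tuple of nonnegative integers that is not balanced (some bit-column sum is not 0 mod 3). Then there exists a 4-tuple x' obtained from x by strictly decreasing at most 2 coordinates (each by a positive amount, leaving the others unchanged) such that x' is balanced (every bit-column sum is 0 or 3). -/

import Mathlib

/-- The `j`-th binary digit of `m`. -/
def digit (m j : ℕ) : ℕ := m / 2 ^ j % 2

/-- The `j`-th column sum of the Bouton matrix of a position. -/
def colSum {n : ℕ} (x : Fin n → ℕ) (j : ℕ) : ℕ := ∑ i, digit (x i) j

/-- A move of classical nim: strictly reduce exactly one pile. -/
def NimMove {n : ℕ} (x y : Fin n → ℕ) : Prop :=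
  ∃ i, y i < x i ∧ ∀ j, j ≠ i → y j = x j

/-- A move of Moore's nim(n, ≤k): strictly reduce at least one and at most `k` piles. -/
def MooreMove (k : ℕ) {n : ℕ} (x y : Fin n → ℕ) : Prop :=
  ∃ S : Finset (Fin n), S.Nonempty ∧ S.card ≤ k ∧ (∀ i ∈ S, y i < x i) ∧ ∀ i ∉ S, y i = x i

/-- A move of exact (n, k) nim: strictly reduce exactly `k` piles. -/
def ExactMove (k : ℕ) {n : ℕ} (x y : Fin n → ℕ) : Prop :=
  ∃ S : Finset (Fin n), S.card = k ∧ (∀ i ∈ S, y i < x i) ∧ ∀ i ∉ S, y i = x i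

/-- N-positions of an impartial game: there is a move to a position all of whose
moves lead to N-positions (i.e. a move to a P-position). -/
inductive NPos {α : Type*} (Move : α → α → Prop) : α → Prop where
  | intro {x y : α} (h : Move x y) (hy : ∀ z, Move y z → NPos Move z) : NPos Move x

/-- P-positions of an impartial game: every move leads to an N-position
(in particular, terminal positions are P-positions). -/
def PPos {α : Type*} (Move : α → α → Prop) (x : α) : Prop :=
  ∀ y, Move x y → NPos Move y


lemma digit_le_one (m j : ℕ) : digit m j ≤ 1 :=
  Nat.lt_succ_iff.mp (Nat.mod_lt _ (by norm_num))

lemma digit_succ (m j : ℕ) : digit m (j+1) = digit (m/2) j := by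
  unfold digit
  rw [Nat.div_div_eq_div_mul, pow_succ']

def ofBits (f : ℕ → ℕ) (J : ℕ) : ℕ := ∑ j ∈ Finset.range J, f j * 2 ^ j

lemma ofBits_lt (f : ℕ → ℕ) (J : ℕ) (hf : ∀ j, f j ≤ 1) : ofBits f J < 2 ^ J := by
  have : ofBits f J ≤ ∑ j ∈ Finset.range J, 1 * 2 ^ j := by
    apply Finset.sum_le_sum
    intro j _
    exact Nat.mul_le_mul_right _ (hf j)
  simp only [one_mul] at this
  have h2 : ∑ j ∈ Finset.range J, 2 ^ j = 2 ^ J - 1 := by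
    clear this hf
    induction J with
    | zero => simp
    | succ n ih => rw [Finset.sum_range_succ, ih, pow_succ]; have := Nat.one_le_two_pow (n := n); omega
  have := Nat.one_le_two_pow (n := J)
  omega

lemma ofBits_shift (f : ℕ → ℕ) (J : ℕ) :
    ofBits f (J+1) = f 0 + 2 * ofBits (fun j => f (j+1)) J := by
  unfold ofBits
  rw [Finset.sum_range_succ' (fun j => f j * 2^j) J, Finset.mul_sum]
  simp only [pow_zero, mul_one, pow_succ]
  rw [add_comm]
  congr 1
  apply Finset.sum_congr rfl
  intro j _
  ring

lemma digit_ofBits (f : ℕ → ℕ) (J : ℕ) (hf : ∀ j, f j ≤ 1) (t : ℕ) :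
    digit (ofBits f J) t = if t < J then f t else 0 := by
  induction J generalizing f t with
  | zero => simp [ofBits, digit]
  | succ n ih =>
    rw [ofBits_shift]
    cases t with
    | zero =>
      simp only [Nat.zero_lt_succ, if_true]
      unfold digit
      simp only [pow_zero, Nat.div_one]
      rw [Nat.add_mul_mod_self_left]
      exact Nat.mod_eq_of_lt (by have := hf 0; omega)
    | succ t =>
      rw [digit_succ]
      have hdiv : (f 0 + 2 * ofBits (fun j => f (j+1)) n) / 2 = ofBits (fun j => f (j+1)) n := by
        rw [Nat.add_mul_div_left _ _ (by norm_num)]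
        have := hf 0
        omega
      rw [hdiv, ih (fun j => f (j+1)) (fun j => hf (j+1)) t]
      simp [Nat.succ_lt_succ_iff]

def replaceLow (m J : ℕ) (f : ℕ → ℕ) : ℕ := m / 2 ^ J * 2 ^ J + ofBits f J

lemma digit_add_mul (a q t J : ℕ) (hJ : t < J) : digit (a + q * 2 ^ J) t = digit a t := by
  unfold digit
  obtain ⟨d, rfl⟩ : ∃ d, J = t + (d+1) := ⟨J - t - 1, by omega⟩
  rw [pow_add]
  rw [show q * (2^t * 2^(d+1)) = (q * 2^(d+1)) * 2^t by ring,
    Nat.add_mul_div_right _ _ (pow_pos (by norm_num) t)]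
  rw [show q * 2^(d+1) = (q*2^d)*2 by ring, Nat.add_mul_mod_self_right]

lemma digit_replaceLow (m J : ℕ) (f : ℕ → ℕ) (hf : ∀ j, f j ≤ 1) (t : ℕ) :
    digit (replaceLow m J f) t = if t < J then f t else digit m t := by
  unfold replaceLow
  by_cases ht : t < J
  · rw [if_pos ht, add_comm, digit_add_mul _ _ _ _ ht, digit_ofBits f J hf t, if_pos ht]
  · rw [if_neg ht]
    push_neg at ht
    unfold digit
    have h2t : (2:ℕ) ^ t = 2 ^ J * 2 ^ (t - J) := by rw [← pow_add]; congr 1; omega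
    rw [h2t, ← Nat.div_div_eq_div_mul, ← Nat.div_div_eq_div_mul]
    congr 2
    rw [add_comm, Nat.add_mul_div_right _ _ (pow_pos (by norm_num) J),
      Nat.div_eq_of_lt (ofBits_lt f J hf)]
    omega

lemma replaceLow_lt (m J : ℕ) (f : ℕ → ℕ) (hf : ∀ j, f j ≤ 1)
    (h1 : digit m J = 1) (h0 : f J = 0) : replaceLow m (J+1) f < m := by
  have hlow : ofBits f (J+1) < 2 ^ J := by
    have : ofBits f (J+1) = ofBits f J + f J * 2 ^ J := Finset.sum_range_succ _ _
    rw [this, h0]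
    simpa using ofBits_lt f J hf
  have hmod : 2 ^ J ≤ m % 2 ^ (J+1) := by
    have h : m / 2 ^ J % 2 = m % (2 ^ J * 2) / 2 ^ J := (Nat.mod_mul_right_div_self m (2^J) 2).symm
    rw [show (2:ℕ)^J * 2 = 2^(J+1) from (pow_succ 2 J).symm] at h
    unfold digit at h1
    rw [h] at h1
    by_contra hc
    push_neg at hc
    rw [Nat.div_eq_of_lt hc] at h1
    exact absurd h1 (by norm_num)
  have hm : m = m / 2 ^ (J+1) * 2 ^ (J+1) + m % 2 ^ (J+1) := by
    rw [Nat.mul_comm]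
    have := Nat.div_add_mod m (2 ^ (J+1))
    omega
  unfold replaceLow
  omega

def tsum1 (x : Fin 4 → ℕ) (i0 : Fin 4) (j : ℕ) : ℕ :=
  ∑ i ∈ Finset.univ.erase i0, digit (x i) j

def tsum2 (x : Fin 4 → ℕ) (i0 i1 : Fin 4) (j : ℕ) : ℕ :=
  ∑ i ∈ (Finset.univ.erase i0).erase i1, digit (x i) j

lemma sum_erase1 (i0 : Fin 4) (f : Fin 4 → ℕ) :
    ∑ i, f i = f i0 + ∑ i ∈ Finset.univ.erase i0, f i :=
  (Finset.add_sum_erase _ f (Finset.mem_univ i0)).symm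

lemma sum_erase2 (i0 i1 : Fin 4) (h : i1 ≠ i0) (f : Fin 4 → ℕ) :
    ∑ i, f i = f i0 + (f i1 + ∑ i ∈ (Finset.univ.erase i0).erase i1, f i) := by
  rw [sum_erase1 i0 f, Finset.add_sum_erase _ f (Finset.mem_erase.mpr ⟨h, Finset.mem_univ i1⟩)]

lemma sum_digit_le (s : Finset (Fin 4)) (x : Fin 4 → ℕ) (j : ℕ) :
    ∑ i ∈ s, digit (x i) j ≤ s.card := by
  calc ∑ i ∈ s, digit (x i) j ≤ ∑ i ∈ s, 1 :=
        Finset.sum_le_sum fun i _ => digit_le_one _ _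
    _ = s.card := by simp

lemma card_erase1 (i0 : Fin 4) : (Finset.univ.erase i0).card = 3 := by
  rw [Finset.card_erase_of_mem (Finset.mem_univ _)]; simp

lemma card_erase2 (i0 i1 : Fin 4) (h : i1 ≠ i0) :
    ((Finset.univ.erase i0).erase i1).card = 2 := by
  rw [Finset.card_erase_of_mem (Finset.mem_erase.mpr ⟨h, Finset.mem_univ i1⟩), card_erase1]

lemma tsum1_le (x : Fin 4 → ℕ) (i0 : Fin 4) (j : ℕ) : tsum1 x i0 j ≤ 3 := by
  have := sum_digit_le (Finset.univ.erase i0) x j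
  rwa [card_erase1] at this

lemma tsum2_le (x : Fin 4 → ℕ) (i0 i1 : Fin 4) (h : i1 ≠ i0) (j : ℕ) :
    tsum2 x i0 i1 j ≤ 2 := by
  have := sum_digit_le ((Finset.univ.erase i0).erase i1) x j
  rwa [card_erase2 i0 i1 h] at this

lemma colSum_decomp1 (x : Fin 4 → ℕ) (i0 : Fin 4) (j : ℕ) :
    colSum x j = digit (x i0) j + tsum1 x i0 j :=
  sum_erase1 i0 _

lemma tsum1_decomp (x : Fin 4 → ℕ) (i0 i1 : Fin 4) (h : i1 ∈ Finset.univ.erase i0) (j : ℕ) :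
    tsum1 x i0 j = digit (x i1) j + tsum2 x i0 i1 j :=
  (Finset.add_sum_erase _ _ h).symm

lemma exists_digit_one (s : Finset (Fin 4)) (x : Fin 4 → ℕ) (j : ℕ)
    (h : ∑ i ∈ s, digit (x i) j ≠ 0) : ∃ i ∈ s, digit (x i) j = 1 := by
  obtain ⟨i, hi, hne⟩ := Finset.exists_ne_zero_of_sum_ne_zero h
  exact ⟨i, hi, by have := digit_le_one (x i) j; omega⟩

lemma one_pile (x : Fin 4 → ℕ) (i0 : Fin 4) (J1 : ℕ)
    (b0 : ℕ → ℕ) (hb0 : ∀ j, b0 j ≤ 1) (h01 : b0 J1 = 0)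
    (hd0 : digit (x i0) J1 = 1)
    (hcol : ∀ j, (if j ≤ J1 then b0 j else digit (x i0) j) + tsum1 x i0 j = 0 ∨
      (if j ≤ J1 then b0 j else digit (x i0) j) + tsum1 x i0 j = 3) :
    ∃ x', MooreMove 2 x x' ∧ ∀ j, colSum x' j = 0 ∨ colSum x' j = 3 := by
  set y0 := replaceLow (x i0) (J1+1) b0 with hy0
  refine ⟨Function.update x i0 y0, ⟨{i0}, ⟨i0, by simp⟩, by simp, ?_, ?_⟩, ?_⟩
  · intro i hi
    rw [Finset.mem_singleton] at hi
    subst hi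
    rw [Function.update_self]
    exact replaceLow_lt _ _ _ hb0 hd0 h01
  · intro i hi
    rw [Finset.mem_singleton] at hi
    exact Function.update_of_ne hi _ _
  · intro j
    have hsum : colSum (Function.update x i0 y0) j = digit y0 j + tsum1 x i0 j := by
      rw [colSum, sum_erase1 i0, Function.update_self]
      unfold tsum1
      congr 1
      apply Finset.sum_congr rfl
      intro i hi
      rw [Function.update_of_ne (Finset.mem_erase.mp hi).1]
    rw [hsum, hy0, digit_replaceLow _ _ _ hb0]
    simp only [Nat.lt_succ_iff]
    exact hcol j

lemma two_pile (x : Fin 4 → ℕ) (i0 i1 : Fin 4) (hne : i1 ≠ i0) (J1 J2 : ℕ)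
    (b0 b1 : ℕ → ℕ) (hb0 : ∀ j, b0 j ≤ 1) (hb1 : ∀ j, b1 j ≤ 1)
    (h01 : b0 J1 = 0) (h11 : b1 J2 = 0)
    (hd0 : digit (x i0) J1 = 1) (hd1 : digit (x i1) J2 = 1)
    (hcol : ∀ j, (if j ≤ J1 then b0 j else digit (x i0) j) +
        ((if j ≤ J2 then b1 j else digit (x i1) j) + tsum2 x i0 i1 j) = 0 ∨
      (if j ≤ J1 then b0 j else digit (x i0) j) +
        ((if j ≤ J2 then b1 j else digit (x i1) j) + tsum2 x i0 i1 j) = 3) :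
    ∃ x', MooreMove 2 x x' ∧ ∀ j, colSum x' j = 0 ∨ colSum x' j = 3 := by
  set y0 := replaceLow (x i0) (J1+1) b0 with hy0
  set y1 := replaceLow (x i1) (J2+1) b1 with hy1
  set y : Fin 4 → ℕ := Function.update (Function.update x i0 y0) i1 y1 with hy
  have hyi0 : y i0 = y0 := by
    rw [hy, Function.update_of_ne (Ne.symm hne), Function.update_self]
  have hyi1 : y i1 = y1 := Function.update_self _ _ _
  have hyo : ∀ i, i ≠ i0 → i ≠ i1 → y i = x i := by
    intro i h0 h1
    rw [hy, Function.update_of_ne h1, Function.update_of_ne h0]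
  refine ⟨y, ⟨{i0, i1}, ⟨i0, by simp⟩, ?_, ?_, ?_⟩, ?_⟩
  · exact le_trans (Finset.card_insert_le _ _) (by simp)
  · intro i hi
    rw [Finset.mem_insert, Finset.mem_singleton] at hi
    rcases hi with rfl | rfl
    · rw [hyi0]; exact replaceLow_lt _ _ _ hb0 hd0 h01
    · rw [hyi1]; exact replaceLow_lt _ _ _ hb1 hd1 h11
  · intro i hi
    rw [Finset.mem_insert, Finset.mem_singleton] at hi
    push_neg at hi
    exact hyo i hi.1 hi.2
  · intro j
    have hsum : colSum y j = digit y0 j + (digit y1 j + tsum2 x i0 i1 j) := by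
      rw [colSum, sum_erase2 i0 i1 hne, hyi0, hyi1]
      unfold tsum2
      congr 2
      apply Finset.sum_congr rfl
      intro i hi
      rw [Finset.mem_erase, Finset.mem_erase] at hi
      rw [hyo i hi.2.1 hi.1]
    rw [hsum, hy0, hy1, digit_replaceLow _ _ _ hb0, digit_replaceLow _ _ _ hb1]
    simp only [Nat.lt_succ_iff]
    exact hcol j

/-- from an unbalanced 4-tuple one can strictly decrease at most two
coordinates to reach a balanced 4-tuple. -/
theorem unbalanced_move_to_balanced (x : Fin 4 → ℕ)
    (hx : ∃ j, colSum x j % 3 ≠ 0) :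
    ∃ x', MooreMove 2 x x' ∧ ∀ j, colSum x' j = 0 ∨ colSum x' j = 3 := by
  obtain ⟨j0, hj0⟩ := hx
  set B := (∑ i, x i) + 1 with hB
  have hxB : ∀ i, x i < 2 ^ B := by
    intro i
    have h1 : x i ≤ ∑ i, x i :=
      Finset.single_le_sum (fun i _ => Nat.zero_le (x i)) (Finset.mem_univ i)
    have h2 : B < 2 ^ B := Nat.lt_two_pow_self
    omega
  have hdig0 : ∀ i j, B ≤ j → digit (x i) j = 0 := by
    intro i j hj
    have : x i < 2 ^ j := lt_of_lt_of_le (hxB i) (Nat.pow_le_pow_right (by norm_num) hj)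
    simp [digit, Nat.div_eq_of_lt this]
  have hcs0 : ∀ j, B ≤ j → colSum x j = 0 := by
    intro j hj
    rw [colSum]
    exact Finset.sum_eq_zero fun i _ => hdig0 i j hj
  have hcs4 : ∀ j, colSum x j ≤ 4 := by
    intro j
    rw [colSum, Fin.sum_univ_four]
    have h0 := digit_le_one (x 0) j
    have h1 := digit_le_one (x 1) j
    have h2 := digit_le_one (x 2) j
    have h3 := digit_le_one (x 3) j
    omega
  have hj0B : j0 < B := by
    by_contra h
    push_neg at h
    rw [hcs0 j0 h] at hj0
    exact hj0 rfl
  set F := (Finset.range B).filter (fun j => colSum x j % 3 ≠ 0) with hF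
  have hFne : F.Nonempty := ⟨j0, Finset.mem_filter.mpr ⟨Finset.mem_range.mpr hj0B, hj0⟩⟩
  set J1 := F.max' hFne with hJ1
  have hJ1bad : colSum x J1 % 3 ≠ 0 := (Finset.mem_filter.mp (F.max'_mem hFne)).2
  have hJ1top : ∀ j, J1 < j → colSum x j = 0 ∨ colSum x j = 3 := by
    intro j hj
    by_cases hjB : j < B
    · have hmod : colSum x j % 3 = 0 := by
        by_contra h
        exact absurd (F.le_max' j (Finset.mem_filter.mpr ⟨Finset.mem_range.mpr hjB, h⟩))
          (by omega)
      have := hcs4 j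
      omega
    · exact Or.inl (hcs0 j (by omega))
  have hs : colSum x J1 = 1 ∨ colSum x J1 = 2 ∨ colSum x J1 = 4 := by
    have := hcs4 J1
    omega
  obtain ⟨i0, -, hi0⟩ : ∃ i ∈ Finset.univ, digit (x i) J1 = 1 := by
    apply exists_digit_one
    rw [← colSum]
    omega
  have hdec1 : ∀ j, colSum x j = digit (x i0) j + tsum1 x i0 j := colSum_decomp1 x i0
  have ht1le : ∀ j, tsum1 x i0 j ≤ 3 := tsum1_le x i0
  by_cases hs2 : colSum x J1 = 2
  · -- two piles reduced at the same column J1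
    have ht1J1 : tsum1 x i0 J1 = 1 := by have := hdec1 J1; omega
    obtain ⟨i1, hi1mem, hi1⟩ : ∃ i ∈ Finset.univ.erase i0, digit (x i) J1 = 1 := by
      apply exists_digit_one
      rw [← tsum1]
      omega
    have hne : i1 ≠ i0 := (Finset.mem_erase.mp hi1mem).1
    have hrel : ∀ j, tsum1 x i0 j = digit (x i1) j + tsum2 x i0 i1 j :=
      tsum1_decomp x i0 i1 hi1mem
    have ht2le : ∀ j, tsum2 x i0 i1 j ≤ 2 := tsum2_le x i0 i1 hne
    have ht2J1 : tsum2 x i0 i1 J1 = 0 := by have := hrel J1; omega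
    apply two_pile x i0 i1 hne J1 J1
      (fun j => if J1 ≤ j then 0 else if tsum2 x i0 i1 j = 0 then 0 else 1)
      (fun j => if J1 ≤ j then 0 else if tsum2 x i0 i1 j = 1 then 1 else 0)
    · intro j; split_ifs <;> omega
    · intro j; split_ifs <;> omega
    · simp
    · simp
    · exact hi0
    · exact hi1
    · intro j
      rcases lt_trichotomy j J1 with hlt | rfl | hgt
      · have := ht2le j
        split_ifs <;> omega
      · have := ht2J1
        split_ifs <;> omega
      · have h1 := hJ1top j hgt
        have h2 := hdec1 j
        have h3 := hrel j
        split_ifs <;> omega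
  · -- colSum x J1 = 1 or 4; reduce pile i0 at column J1
    have hs14 : colSum x J1 = 1 ∨ colSum x J1 = 4 := by omega
    have ht1J1 : tsum1 x i0 J1 = 0 ∨ tsum1 x i0 J1 = 3 := by have := hdec1 J1; omega
    by_cases hall : ∀ j, j < J1 → tsum1 x i0 j ≠ 1
    · apply one_pile x i0 J1
        (fun j => if J1 ≤ j then 0 else if tsum1 x i0 j = 2 then 1 else 0)
      · intro j; split_ifs <;> omega
      · simp
      · exact hi0
      · intro j
        rcases lt_trichotomy j J1 with hlt | rfl | hgt
        · have := ht1le j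
          have := hall j hlt
          split_ifs <;> omega
        · split_ifs <;> omega
        · have h1 := hJ1top j hgt
          have h2 := hdec1 j
          split_ifs <;> omega
    · push_neg at hall
      obtain ⟨jw, hjwlt, hjw⟩ := hall
      set F2 := (Finset.range J1).filter (fun j => tsum1 x i0 j = 1) with hF2
      have hF2ne : F2.Nonempty := ⟨jw, Finset.mem_filter.mpr ⟨Finset.mem_range.mpr hjwlt, hjw⟩⟩
      set J2 := F2.max' hF2ne with hJ2
      have hJ2mem := F2.max'_mem hF2ne
      have hJ2lt : J2 < J1 := Finset.mem_range.mp (Finset.mem_filter.mp hJ2mem).1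
      have hJ2one : tsum1 x i0 J2 = 1 := (Finset.mem_filter.mp hJ2mem).2
      have hJ2top : ∀ j, J2 < j → j < J1 → tsum1 x i0 j ≠ 1 := by
        intro j hj1 hj2 h
        exact absurd (F2.le_max' j (Finset.mem_filter.mpr ⟨Finset.mem_range.mpr hj2, h⟩))
          (by omega)
      obtain ⟨i1, hi1mem, hi1⟩ : ∃ i ∈ Finset.univ.erase i0, digit (x i) J2 = 1 := by
        apply exists_digit_one
        rw [← tsum1]
        omega
      have hne : i1 ≠ i0 := (Finset.mem_erase.mp hi1mem).1
      have hrel : ∀ j, tsum1 x i0 j = digit (x i1) j + tsum2 x i0 i1 j :=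
        tsum1_decomp x i0 i1 hi1mem
      have ht2le : ∀ j, tsum2 x i0 i1 j ≤ 2 := tsum2_le x i0 i1 hne
      have ht2J2 : tsum2 x i0 i1 J2 = 0 := by have := hrel J2; omega
      apply two_pile x i0 i1 hne J1 J2
        (fun j => if J1 ≤ j then 0 else if J2 < j then (if tsum1 x i0 j = 2 then 1 else 0)
          else if j < J2 then (if tsum2 x i0 i1 j = 0 then 0 else 1) else 0)
        (fun j => if J2 ≤ j then 0 else if tsum2 x i0 i1 j = 1 then 1 else 0)
      · intro j; split_ifs <;> omega
      · intro j; split_ifs <;> omega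
      · simp
      · simp
      · exact hi0
      · exact hi1
      · intro j
        by_cases hA : J1 < j
        · have h1 := hJ1top j hA
          have h2 := hdec1 j
          have h3 := hrel j
          split_ifs <;> omega
        · push_neg at hA
          by_cases hBc : j = J1
          · subst hBc
            have h3 := hrel J1
            split_ifs <;> omega
          · have hjlt : j < J1 := lt_of_le_of_ne hA hBc
            by_cases hC : J2 < j
            · have h1 := hJ2top j hC hjlt
              have h2 := ht1le j
              have h3 := hrel j
              split_ifs <;> omega
            · push_neg at hC
              by_cases hD : j = J2
              · subst hD
                split_ifs <;> omega
              · have hjJ2 : j < J2 := lt_of_le_of_ne hC hD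
                have h2 := ht2le j
                split_ifs <;> omega
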